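/- Let (a_ε)_{ε∈(0,1]} be a bounded family of real numbers and let B be its set of limit points as ε → 0. Let K ⊆ ℝ be closed and let (x₀,t₀) ∈ ℝ² be such that x₀ − b t₀ ∉ K for every b ∈ B. Then there exist a neighborhood V of (x₀,t₀) in ℝ² and η > 0 such that x − a_ε t ∉ K for all (x,t) ∈ V and all 0 < ε < η. (This establishes the singular support inclusion sing supp(U) ⊆ {(x,t) : ∃b ∈ B with x − bt ∈ sing supp(U₀)} for the transport equation (∂_t + a∂_x)U = 0, U|_{t=0} = U₀ in the Colombeau setting.) -/
import Mathlib


open Filter Topology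

/--
Let `(a_ε)_{ε∈(0,1]}` be a bounded family of real numbers with limit
point set `B` as `ε → 0`. Let `K ⊆ ℝ` be closed and `(x₀,t₀) ∈ ℝ²` with
`x₀ − b·t₀ ∉ K` for every `b ∈ B`. Then there are a neighborhood `V` of `(x₀,t₀)` in
`ℝ²` and `η > 0` such that `x − a_ε t ∉ K` for all `(x,t) ∈ V` and `0 < ε < η`.
-/
theorem stmt11 (a : ℝ → ℝ)
    (hbound : ∃ C : ℝ, ∀ ε ∈ Set.Ioc (0 : ℝ) 1, |a ε| ≤ C)
    (B : Set ℝ)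
    (hB : B = {b | ∃ e : ℕ → ℝ, (∀ k, e k ∈ Set.Ioc (0 : ℝ) 1) ∧
      Tendsto e atTop (𝓝 0) ∧ Tendsto (fun k => a (e k)) atTop (𝓝 b)})
    (K : Set ℝ) (hK : IsClosed K)
    (x₀ t₀ : ℝ) (havoid : ∀ b ∈ B, x₀ - b * t₀ ∉ K) :
    ∃ V ∈ 𝓝 ((x₀, t₀) : ℝ × ℝ), ∃ η : ℝ, 0 < η ∧
      ∀ p ∈ V, ∀ ε : ℝ, 0 < ε → ε < η → p.1 - a ε * p.2 ∉ K := by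
  by_contra hcon
  push_neg at hcon
  obtain ⟨C, hC⟩ := hbound
  have hchoice : ∀ k : ℕ, ∃ p : ℝ × ℝ, p ∈ Metric.ball ((x₀, t₀) : ℝ × ℝ) (1 / (k + 1)) ∧
      ∃ ε : ℝ, 0 < ε ∧ ε < 1 / (k + 1) ∧ p.1 - a ε * p.2 ∈ K := by
    intro k
    have hpos : (0 : ℝ) < 1 / (k + 1) := by positivity
    obtain ⟨p, hp, ε, hε1, hε2, hεK⟩ := hcon (Metric.ball ((x₀, t₀) : ℝ × ℝ) (1 / (k + 1)))
      (Metric.ball_mem_nhds _ hpos) (1 / (k + 1)) hpos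
    exact ⟨p, hp, ε, hε1, hε2, hεK⟩
  choose p hp ε hε1 hε2 hεK using hchoice
  have hεIoc : ∀ k, ε k ∈ Set.Ioc (0 : ℝ) 1 := by
    intro k
    refine ⟨hε1 k, le_of_lt ((hε2 k).trans_le ?_)⟩
    rw [div_le_one (by positivity)]
    linarith [Nat.cast_nonneg (α := ℝ) k]
  have hmem : ∀ k, a (ε k) ∈ Set.Icc (-C) C := fun k => abs_le.mp (hC (ε k) (hεIoc k))
  obtain ⟨b, _, φ, hφ, hφtendsto⟩ := tendsto_subseq_of_bounded
    (Metric.isBounded_Icc (-C) C) hmem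
  have hφk : ∀ k : ℕ, (k : ℝ) ≤ (φ k : ℝ) := fun k => Nat.cast_le.mpr (hφ.le_apply)
  have hone : Tendsto (fun k : ℕ => 1 / ((φ k : ℝ) + 1)) atTop (𝓝 0) := by
    apply squeeze_zero (fun k => by positivity) (fun k => ?_)
      tendsto_one_div_add_atTop_nhds_zero_nat
    apply one_div_le_one_div_of_le (by positivity)
    linarith [hφk k]
  have hεtendsto : Tendsto (fun k => ε (φ k)) atTop (𝓝 0) :=
    squeeze_zero (fun k => (hε1 (φ k)).le) (fun k => (hε2 (φ k)).le) hone
  have hbB : b ∈ B := by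
    rw [hB]
    exact ⟨fun k => ε (φ k), fun k => hεIoc (φ k), hεtendsto, hφtendsto⟩
  have hptendsto : Tendsto (fun k => p (φ k)) atTop (𝓝 ((x₀, t₀) : ℝ × ℝ)) := by
    rw [tendsto_iff_dist_tendsto_zero]
    apply squeeze_zero (fun k => dist_nonneg) (fun k => (Metric.mem_ball.mp (hp (φ k))).le) hone
  have h1 : Tendsto (fun k => (p (φ k)).1 - a (ε (φ k)) * (p (φ k)).2) atTop
      (𝓝 (x₀ - b * t₀)) := by
    have hx : Tendsto (fun k => (p (φ k)).1) atTop (𝓝 x₀) :=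
      (continuous_fst.tendsto _).comp hptendsto
    have ht : Tendsto (fun k => (p (φ k)).2) atTop (𝓝 t₀) :=
      (continuous_snd.tendsto _).comp hptendsto
    exact hx.sub (hφtendsto.mul ht)
  exact havoid b hbB (hK.mem_of_tendsto h1 (Eventually.of_forall fun k => hεK (φ k)))
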